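/- Let B̃ = (b_ij) be an m×n integer matrix (m ≥ n) with b_kk = 0 for a fixed k ∈ {1,…,n}, and let B̃' = μ_k(B̃). Let E be the m×m matrix with entries e_ij = δ_ij for j ≠ k, e_kk = −1, and e_ik = max(0, b_ik) for i ≠ k. Denoting by b̃_j and b̃'_j the jth columns of B̃ and B̃' respectively, one has E·b̃'_j = b̃_j + max(0, −b_kj)·b̃_k for every j ∈ {1,…,n} with j ≠ k, and E·b̃'_k = −b̃_k. -/

import Mathlib

open Matrix

/-- Matrix mutation of an `m × n` integer matrix in direction `k ∈ [1, n]`. -/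
def matrixMutation {m n : ℕ} (h : n ≤ m) (B : Matrix (Fin m) (Fin n) ℤ) (k : Fin n) :
    Matrix (Fin m) (Fin n) ℤ :=
  fun i j =>
    if i = Fin.castLE h k ∨ j = k then -B i j
    else B i j + Int.sign (B i k) * max (B i k * B (Fin.castLE h k) j) 0

lemma key_sign_max (a c : ℤ) :
    a.sign * max (a * c) 0 = max 0 (-c) * a + max 0 a * c := by
  rcases lt_trichotomy a 0 with ha | ha | ha
  · have hmaxa : max 0 a = 0 := max_eq_left ha.le
    rw [Int.sign_eq_neg_one_of_neg ha, hmaxa]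
    rcases le_or_gt c 0 with hc | hc
    · have h1 : 0 ≤ a * c := by nlinarith
      rw [max_eq_left h1, max_eq_right (neg_nonneg.mpr hc)]; ring
    · have h1 : a * c ≤ 0 := by nlinarith
      rw [max_eq_right h1, max_eq_left (by omega : -c ≤ 0)]; ring
  · simp [ha]
  · have hmaxa : max 0 a = a := max_eq_right ha.le
    rw [Int.sign_eq_one_of_pos ha, hmaxa]
    rcases le_or_gt c 0 with hc | hc
    · have h1 : a * c ≤ 0 := by nlinarith
      rw [max_eq_right h1, max_eq_right (neg_nonneg.mpr hc)]; ring
    · have h1 : 0 ≤ a * c := mul_nonneg ha.le hc.le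
      rw [max_eq_left h1, max_eq_left (by omega : -c ≤ 0)]; ring

/-- Let `B̃ = (b_ij)` be an `m × n` integer matrix (`m ≥ n`) with `b_kk = 0` for a fixed
`k ∈ [1, n]`, and let `B̃' = μ_k(B̃)`.  Let `E` be the `m × m` matrix with entries
`e_ij = δ_ij` for `j ≠ k`, `e_kk = −1`, and `e_ik = max(0, b_ik)` for `i ≠ k`.
Denoting by `b̃_j` (resp. `b̃'_j`) the `j`th column of `B̃` (resp. `B̃'`), one has
`E b̃'_j = b̃_j + max(0, −b_kj) b̃_k` for every `j ≠ k`, and `E b̃'_k = −b̃_k`. -/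
theorem Emat_mulVec_mutated_columns {m n : ℕ} (h : n ≤ m)
    (B : Matrix (Fin m) (Fin n) ℤ) (k : Fin n)
    (hkk : B (Fin.castLE h k) k = 0)
    (E : Matrix (Fin m) (Fin m) ℤ)
    (hE : ∀ i j : Fin m, E i j =
      if j = Fin.castLE h k then
        (if i = Fin.castLE h k then -1 else max 0 (B i k))
      else (if i = j then 1 else 0)) :
    (∀ j : Fin n, j ≠ k →
        E.mulVec (fun i => matrixMutation h B k i j) =
          (fun i => B i j) + max 0 (-(B (Fin.castLE h k) j)) • (fun i => B i k)) ∧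
      E.mulVec (fun i => matrixMutation h B k i k) = -(fun i => B i k) := by
  set k' := Fin.castLE h k with hk'
  have hmv : ∀ (v : Fin m → ℤ) (i : Fin m),
      E.mulVec v i =
        (if i = k' then -1 else max 0 (B i k)) * v k' +
          (if i = k' then 0 else v i) := by
    intro v i
    rw [mulVec, dotProduct,
      ← Finset.add_sum_erase Finset.univ _ (Finset.mem_univ k')]
    congr 1
    · rw [hE]; simp
    · have : ∀ l ∈ Finset.univ.erase k', E i l * v l =
          if l = i then (if i = k' then 0 else v i) else 0 := by
        intro l hl
        have hl' : l ≠ k' := Finset.ne_of_mem_erase hl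
        rw [hE, if_neg hl']
        rcases eq_or_ne l i with rfl | hli
        · simp [if_neg hl']
        · simp [hli, Ne.symm hli]
      rw [Finset.sum_congr rfl this, Finset.sum_ite_eq']
      rcases eq_or_ne i k' with rfl | hik
      · simp
      · simp [Finset.mem_erase, hik]
  constructor
  · intro j hj
    funext i
    rw [hmv]
    have hvk : matrixMutation h B k k' j = -B k' j := by
      simp [matrixMutation, ← hk']
    simp only [Pi.add_apply, Pi.smul_apply, smul_eq_mul, hvk]
    rcases eq_or_ne i k' with rfl | hik
    · simp [hkk]
    · have h1 : ¬(i = k' ∨ j = k) := by push_neg; exact ⟨hik, hj⟩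
      have hvi : matrixMutation h B k i j =
          B i j + (B i k).sign * max (B i k * B k' j) 0 := by
        simp [matrixMutation, ← hk', h1]
      simp only [if_neg hik, hvi]
      rw [key_sign_max (B i k) (B k' j)]
      ring
  · funext i
    rw [hmv]
    simp only [matrixMutation, if_pos (Or.inr rfl), Pi.neg_apply]
    rcases eq_or_ne i k' with rfl | hik
    · simp [hkk]
    · simp [hik, hkk]
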